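/- Let V = ℝ^{r_1} × ℂ^{r_2}, and for v ∈ V let T(v) = {l : |v^{(l)}| > 1} and H(v) = ∏_{l ∈ T(v), l ≤ r_1} |v^{(l)}| · ∏_{l ∈ T(v), l > r_1} |v^{(l)}|². Then for any α < −1 and A > 0, the integral of H(v)^α over the set {v ∈ V : H(v) ≤ A} is bounded by a constant depending only on α, r_1, r_2, uniformly in A. -/

import Mathlib

open MeasureTheory

lemma aux_max_bound {x β : ℝ} (hx : 0 ≤ x) (hβ : β ≤ 0) :
    (max x 1) ^ β ≤ 2 ^ (-β) * (1 + x) ^ β := by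
  have h1 : (1 + x) / 2 ≤ max x 1 := by
    rcases le_total x 1 with h | h
    · rw [max_eq_right h]; linarith
    · rw [max_eq_left h]; linarith
  have h2 : (0 : ℝ) < (1 + x) / 2 := by linarith
  calc (max x 1) ^ β ≤ ((1 + x) / 2) ^ β := Real.rpow_le_rpow_of_nonpos h2 h1 hβ
    _ = 2 ^ (-β) * (1 + x) ^ β := by
        rw [Real.div_rpow (by linarith) (by norm_num), Real.rpow_neg (by norm_num),
          div_eq_inv_mul]

lemma aux_int_real {α : ℝ} (hα : α < -1) :
    Integrable (fun x : ℝ => (max |x| 1) ^ α) := by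
  have hint : Integrable (fun x : ℝ => (2 : ℝ) ^ (-α) * (1 + ‖x‖) ^ (-(-α))) :=
    (integrable_one_add_norm (E := ℝ) (by simp; linarith)).const_mul _
  refine hint.mono' ?_ ?_
  · exact ((continuous_abs.max continuous_const).rpow_const
      (fun x => Or.inl (by positivity))).aestronglyMeasurable
  · filter_upwards with x
    rw [Real.norm_of_nonneg (Real.rpow_nonneg (le_trans zero_le_one (le_max_right _ _)) _),
      neg_neg]
    exact aux_max_bound (abs_nonneg x) (by linarith)

lemma aux_int_cx {α : ℝ} (hα : α < -1) :
    Integrable (fun z : ℂ => (max (‖z‖ ^ 2) 1) ^ α) := by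
  have key : ∀ z : ℂ, (max (‖z‖ ^ 2) 1) ^ α = (max (‖z‖) 1) ^ (2 * α) := by
    intro z
    have habs := norm_nonneg z
    have : max (‖z‖ ^ 2) 1 = (max (‖z‖) 1) ^ 2 := by
      rcases le_total (‖z‖) 1 with h | h
      · rw [max_eq_right (by nlinarith : ‖z‖ ^ 2 ≤ 1), max_eq_right h, one_pow]
      · rw [max_eq_left (by nlinarith : 1 ≤ ‖z‖ ^ 2), max_eq_left h]
    rw [this, ← Real.rpow_natCast (max (‖z‖) 1) 2,
      ← Real.rpow_mul (le_trans zero_le_one (le_max_right _ _))]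
    norm_num
  simp only [key]
  have hint : Integrable (fun z : ℂ => (2 : ℝ) ^ (-(2 * α)) * (1 + ‖z‖) ^ (-(-(2 * α)))) :=
    (integrable_one_add_norm (E := ℂ) (by rw [Complex.finrank_real_complex]; push_cast; linarith)).const_mul _
  refine hint.mono' ?_ ?_
  · exact ((continuous_norm.max continuous_const).rpow_const
      (fun z => Or.inl (by positivity))).aestronglyMeasurable
  · filter_upwards with z
    rw [Real.norm_of_nonneg (Real.rpow_nonneg (le_trans zero_le_one (le_max_right _ _)) _),
      neg_neg]
    exact aux_max_bound (norm_nonneg z) (by linarith)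

/-- Let `V = ℝ^{r₁} × ℂ^{r₂}` and, for `v ∈ V`, let
`H(v) = ∏_{|v⁽ˡ⁾|>1, l real} |v⁽ˡ⁾| · ∏_{|v⁽ˡ⁾|>1, l complex} |v⁽ˡ⁾|²`. Then for `α < −1`
the integral of `H(v)^α` over `{v : H(v) ≤ A}` is bounded uniformly in `A > 0`. -/
theorem stmt11 (r₁ r₂ : ℕ) (α : ℝ) (hα : α < -1) :
    ∃ C : ℝ, ∀ A : ℝ, 0 < A →
      (∫ v in {v : (Fin r₁ → ℝ) × (Fin r₂ → ℂ) |
          (∏ l ∈ Finset.univ.filter (fun l => 1 < |v.1 l|), |v.1 l|) *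
            (∏ l ∈ Finset.univ.filter (fun l => 1 < ‖v.2 l‖),
              ‖v.2 l‖ ^ 2) ≤ A},
        ((∏ l ∈ Finset.univ.filter (fun l => 1 < |v.1 l|), |v.1 l|) *
          (∏ l ∈ Finset.univ.filter (fun l => 1 < ‖v.2 l‖),
            ‖v.2 l‖ ^ 2)) ^ α ∂volume) ≤ C := by
  set F : (Fin r₁ → ℝ) × (Fin r₂ → ℂ) → ℝ := fun v =>
    (∏ l, (max |v.1 l| 1) ^ α) * (∏ l, (max (‖v.2 l‖ ^ 2) 1) ^ α) with hF
  have hrw : ∀ v : (Fin r₁ → ℝ) × (Fin r₂ → ℂ),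
      ((∏ l ∈ Finset.univ.filter (fun l => 1 < |v.1 l|), |v.1 l|) *
        (∏ l ∈ Finset.univ.filter (fun l => 1 < ‖v.2 l‖),
          ‖v.2 l‖ ^ 2)) ^ α = F v := by
    intro v
    have h1 : (∏ l ∈ Finset.univ.filter (fun l => 1 < |v.1 l|), |v.1 l|)
        = ∏ l, max |v.1 l| 1 := by
      rw [Finset.prod_filter]
      refine Finset.prod_congr rfl fun l _ => ?_
      split_ifs with h
      · exact (max_eq_left h.le).symm
      · exact (max_eq_right (not_lt.1 h)).symm
    have h2 : (∏ l ∈ Finset.univ.filter (fun l => 1 < ‖v.2 l‖),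
        ‖v.2 l‖ ^ 2) = ∏ l, max (‖v.2 l‖ ^ 2) 1 := by
      rw [Finset.prod_filter]
      refine Finset.prod_congr rfl fun l _ => ?_
      have := norm_nonneg (v.2 l)
      split_ifs with h
      · exact (max_eq_left (by nlinarith)).symm
      · exact (max_eq_right (by nlinarith [not_lt.1 h])).symm
    rw [h1, h2, Real.mul_rpow (Finset.prod_nonneg fun l _ => le_trans zero_le_one (le_max_right _ _))
        (Finset.prod_nonneg fun l _ => le_trans zero_le_one (le_max_right _ _)),
      ← Real.finset_prod_rpow _ _ (fun l _ => le_trans zero_le_one (le_max_right _ _)),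
      ← Real.finset_prod_rpow _ _ (fun l _ => le_trans zero_le_one (le_max_right _ _))]
  have hInt : Integrable F := by
    exact Integrable.mul_prod
      (Integrable.fintype_prod (f := fun (_ : Fin r₁) (x : ℝ) => (max |x| 1) ^ α)
        fun _ => aux_int_real hα)
      (Integrable.fintype_prod (f := fun (_ : Fin r₂) (z : ℂ) => (max (‖z‖ ^ 2) 1) ^ α)
        fun _ => aux_int_cx hα)
  refine ⟨∫ v, F v, fun A _ => ?_⟩
  have hnn : 0 ≤ᵐ[volume] F := Filter.Eventually.of_forall fun v =>
    mul_nonneg (Finset.prod_nonneg fun l _ => Real.rpow_nonneg (le_trans zero_le_one (le_max_right _ _)) _)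
      (Finset.prod_nonneg fun l _ => Real.rpow_nonneg (le_trans zero_le_one (le_max_right _ _)) _)
  simp only [hrw]
  exact setIntegral_le_integral hInt hnn
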